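/- Let T > 0, let N ≥ 1 be an integer, let C ≥ 1 and β > α > 1 be real constants, and let f, g : ℝ → ℝ be functions satisfying max(|f(x)|, |g(x)|) ≥ |x|^β / C and min(|f(x)|, |g(x)|) ≤ C·|x|^α for every x ∈ ℝ with |x| ≥ C. Set r := max(2, C, (2CN/T + 2C²)^{1/(β−α)}). Suppose y_1, …, y_N and w_1, …, w_{N−1} are real numbers satisfying y_{k+1} = y_k + (T/N)·f(y_k) + g(y_k)·w_k and |w_k| ∈ [T/N, 2T/N] for every k = 1, …, N−1, and suppose |y_1| ≥ r. Then |y_k| ≥ r^{α^{k−1}} for every k = 1, 2, …, N. -/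

import Mathlib

theorem stmt_8 (T : ℝ) (hT : 0 < T) (N : ℕ) (hN : 1 ≤ N)
    (C α β : ℝ) (hC : 1 ≤ C) (hα : 1 < α) (hαβ : α < β)
    (f g : ℝ → ℝ)
    (hmax : ∀ x : ℝ, C ≤ |x| → |x| ^ β / C ≤ max |f x| |g x|)
    (hmin : ∀ x : ℝ, C ≤ |x| → min |f x| |g x| ≤ C * |x| ^ α)
    (r : ℝ) (hr : r = max 2 (max C ((2 * C * N / T + 2 * C ^ 2) ^ (1 / (β - α)))))
    (y w : ℕ → ℝ)
    (hrec : ∀ k, 1 ≤ k → k ≤ N - 1 → y (k + 1) = y k + (T / N) * f (y k) + g (y k) * w k)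
    (hw : ∀ k, 1 ≤ k → k ≤ N - 1 → |w k| ∈ Set.Icc (T / N) (2 * T / N))
    (hy1 : r ≤ |y 1|) :
    ∀ k, 1 ≤ k → k ≤ N → r ^ (α ^ (k - 1)) ≤ |y k| := by
  have hNpos : (0:ℝ) < N := by exact_mod_cast Nat.lt_of_lt_of_le Nat.zero_lt_one hN
  set h : ℝ := T / N with hh
  have hhpos : 0 < h := div_pos hT hNpos
  have hβα : 0 < β - α := by linarith
  have hr2 : (2:ℝ) ≤ r := by rw [hr]; exact le_max_left _ _
  have hrC : C ≤ r := by rw [hr]; exact le_trans (le_max_left _ _) (le_max_right _ _)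
  have hr1 : (1:ℝ) ≤ r := by linarith
  have hr0 : (0:ℝ) < r := by linarith
  have hKpos : (0:ℝ) < 2 * C * N / T + 2 * C ^ 2 := by
    have h1 : 0 < 2 * C * N / T := by positivity
    nlinarith
  have hrK : (2 * C * N / T + 2 * C ^ 2) ≤ r ^ (β - α) := by
    have hle : (2 * C * N / T + 2 * C ^ 2) ^ (1 / (β - α)) ≤ r := by
      rw [hr]; exact le_trans (le_max_right _ _) (le_max_right _ _)
    have := Real.rpow_le_rpow (Real.rpow_nonneg hKpos.le _) hle hβα.le
    rwa [← Real.rpow_mul hKpos.le, one_div_mul_cancel hβα.ne', Real.rpow_one] at this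
  -- key: h * r^(β-α) ≥ 2*C + 2*C^2*h
  have hNT : (N:ℝ) * h = T := by rw [hh, mul_div_assoc', div_eq_iff hNpos.ne']; ring
  intro k hk1
  induction k, hk1 using Nat.le_induction with
  | base => intro _; simpa using hy1
  | succ k hk IH =>
    intro hkN1
    have hkN : k ≤ N := le_trans (Nat.le_succ k) hkN1
    have hz := IH hkN
    set z := |y k| with hzdef
    have hk1' : k ≤ N - 1 := by omega
    have hαk1 : (1:ℝ) ≤ α ^ (k - 1) := one_le_pow₀ hα.le
    have hzr : r ≤ z := by
      calc r = r ^ (1:ℝ) := (Real.rpow_one r).symm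
        _ ≤ r ^ (α ^ (k - 1)) := Real.rpow_le_rpow_of_exponent_le hr1 hαk1
        _ ≤ z := hz
    have hz1 : (1:ℝ) ≤ z := le_trans hr1 hzr
    have hz2 : (2:ℝ) ≤ z := le_trans hr2 hzr
    have hzC : C ≤ z := le_trans hrC hzr
    have hz0 : (0:ℝ) < z := by linarith
    set A := z ^ α with hA
    set B := z ^ (β - α) with hB
    have hA0 : 0 < A := Real.rpow_pos_of_pos hz0 _
    have hzA : z ≤ A := by
      calc z = z ^ (1:ℝ) := (Real.rpow_one z).symm
        _ ≤ A := Real.rpow_le_rpow_of_exponent_le hz1 hα.le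
    have hBr : r ^ (β - α) ≤ B := Real.rpow_le_rpow hr0.le hzr hβα.le
    have hBK : 2 * C * N / T + 2 * C ^ 2 ≤ B := le_trans hrK hBr
    have hhB : 2 * C + 2 * C ^ 2 * h ≤ h * B := by
      have h2 : h * (2 * C * N / T) = 2 * C := by
        rw [hh, div_mul_div_comm, div_eq_iff (by positivity)]
        ring
      nlinarith [mul_le_mul_of_nonneg_left hBK hhpos.le]
    have hzβ : z ^ β = A * B := by
      rw [hA, hB, ← Real.rpow_add hz0]; ring_nf
    -- the recursion step
    have hrec' := hrec k hk hk1'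
    have hwk := hw k hk hk1'
    obtain ⟨hwl, hwu⟩ := hwk
    have hW0 : 0 ≤ |w k| := abs_nonneg _
    have hmaxk := hmax (y k) hzC
    have hmink := hmin (y k) hzC
    rw [hzβ] at hmaxk
    -- goal: r ^ α ^ (k+1-1) ≤ |y (k+1)|
    have hgoalA : r ^ (α ^ (k + 1 - 1)) ≤ A := by
      have hk' : k - 1 + 1 = k := Nat.sub_add_cancel hk
      have : α ^ k = α ^ (k - 1) * α := by rw [← pow_succ, hk']
      simp only [Nat.add_sub_cancel, this]
      rw [Real.rpow_mul hr0.le]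
      exact Real.rpow_le_rpow (Real.rpow_nonneg hr0.le _) hz (by linarith)
    refine le_trans hgoalA ?_
    -- now show A ≤ |y (k+1)|
    set F := |f (y k)| with hF
    set G := |g (y k)| with hG
    have hF0 : 0 ≤ F := abs_nonneg _
    have hG0 : 0 ≤ G := abs_nonneg _
    rcases le_total G F with hcase | hcase
    · -- F is the max, G is the min
      have hFbig : A * B / C ≤ F := le_trans hmaxk (by simpa [max_eq_left hcase])
      have hGsmall : G ≤ C * A := le_trans (by simp [min_eq_right hcase]) hmink
      -- |y(k+1)| ≥ h*F - z - G*|w|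
      have htri : h * F ≤ |y (k + 1)| + (z + G * |w k|) := by
        have e1 : h * f (y k) = y (k + 1) - (y k + g (y k) * w k) := by
          rw [hrec']; ring
        have : |h * f (y k)| ≤ |y (k+1)| + |y k + g (y k) * w k| := by
          rw [e1]; exact abs_sub _ _
        have h2 : |y k + g (y k) * w k| ≤ z + G * |w k| := by
          calc |y k + g (y k) * w k| ≤ |y k| + |g (y k) * w k| := abs_add_le _ _
            _ = z + G * |w k| := by rw [abs_mul]
        have h3 : |h * f (y k)| = h * F := by
          rw [abs_mul, abs_of_pos hhpos]
        linarith
      have hGW : G * |w k| ≤ C * A * (2 * h) := by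
        have : 2 * T / N = 2 * h := by rw [hh]; ring
        rw [this] at hwu
        exact mul_le_mul hGsmall hwu hW0 (by positivity)
      have hFlow : h * (A * B / C) ≤ h * F := mul_le_mul_of_nonneg_left hFbig hhpos.le
      have hkey : A * (2 * C + 2 * C ^ 2 * h) ≤ A * (h * B) := by
        exact mul_le_mul_of_nonneg_left hhB hA0.le
      have hC0 : (0:ℝ) < C := by linarith
      have hdiv : h * (A * B / C) = A * (h * B) / C := by ring
      have h4 : A * (2 * C + 2 * C ^ 2 * h) / C ≤ A * (h * B) / C := by gcongr
      have e : A * (2 * C + 2 * C ^ 2 * h) / C = 2 * A + 2 * C * h * A := by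
        field_simp
      have e2 : C * A * (2 * h) = 2 * C * h * A := by ring
      linarith
    · -- G is the max, F is the min
      have hGbig : A * B / C ≤ G := le_trans hmaxk (by simpa [max_eq_right hcase])
      have hFsmall : F ≤ C * A := le_trans (by simp [min_eq_left hcase]) hmink
      have htri : G * |w k| ≤ |y (k + 1)| + (z + h * F) := by
        have e1 : g (y k) * w k = y (k + 1) - (y k + h * f (y k)) := by
          rw [hrec']; ring
        have : |g (y k) * w k| ≤ |y (k+1)| + |y k + h * f (y k)| := by
          rw [e1]; exact abs_sub _ _
        have h2 : |y k + h * f (y k)| ≤ z + h * F := by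
          calc |y k + h * f (y k)| ≤ |y k| + |h * f (y k)| := abs_add_le _ _
            _ = z + h * F := by rw [abs_mul, abs_of_pos hhpos]
        have h3 : |g (y k) * w k| = G * |w k| := abs_mul _ _
        linarith
      have hGW : (A * B / C) * h ≤ G * |w k| := by
        exact mul_le_mul hGbig hwl (by positivity) hG0
      have hFh : h * F ≤ h * (C * A) := mul_le_mul_of_nonneg_left hFsmall hhpos.le
      have hkey : A * (2 * C + 2 * C ^ 2 * h) ≤ A * (h * B) := by
        exact mul_le_mul_of_nonneg_left hhB hA0.le
      have hC0 : (0:ℝ) < C := by linarith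
      have hdiv : (A * B / C) * h = A * (h * B) / C := by ring
      have h4 : A * (2 * C + 2 * C ^ 2 * h) / C ≤ A * (h * B) / C := by gcongr
      have e : A * (2 * C + 2 * C ^ 2 * h) / C = 2 * A + 2 * C * h * A := by
        field_simp
      have e2 : h * (C * A) = C * h * A := by ring
      have hChA : 0 ≤ C * h * A := by positivity
      linarith
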